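/- If B^{IJ} and C^{IJ} are antisymmetric tensors on ℝ⁴ and there exists a nonzero vector N^I such that (⋆B)^{IJ}N_J = 0 and (⋆C)^{IJ}N_J = 0, then ε_{IJKL}B^{IJ}C^{KL} = 0. -/
import Mathlib


noncomputable section
open scoped BigOperators

/-- Sign of an integer, as a real number. -/
def sgnZ (x : ℤ) : ℝ := if 0 < x then 1 else if x < 0 then -1 else 0

/-- Levi-Civita symbol ε_{IJKL} on ℝ⁴, with ε_{0123} = 1. -/
def eps4 (a b c d : Fin 4) : ℝ :=
  sgnZ ((b:ℤ) - a) * sgnZ ((c:ℤ) - a) * sgnZ ((d:ℤ) - a) *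
  sgnZ ((c:ℤ) - b) * sgnZ ((d:ℤ) - b) * sgnZ ((d:ℤ) - c)

/-- Levi-Civita symbol on indices 1,2,3 (here `Fin 3`). -/
def eps3 (a b c : Fin 3) : ℝ := sgnZ ((b:ℤ) - a) * sgnZ ((c:ℤ) - a) * sgnZ ((c:ℤ) - b)

/-- Antisymmetry of a 4×4 real array. -/
def Antisym (B : Fin 4 → Fin 4 → ℝ) : Prop := ∀ I J, B I J = - B J I

/-- Self-dual part B_+^i = (1/4) ε^i_{jk} B^{jk} + (1/2) B^{0i}. -/
def Bplus (B : Fin 4 → Fin 4 → ℝ) (i : Fin 3) : ℝ :=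
  (1/4) * ∑ j, ∑ k, eps3 i j k * B j.succ k.succ + (1/2) * B 0 i.succ

/-- Anti-self-dual part B_-^i = (1/4) ε^i_{jk} B^{jk} - (1/2) B^{0i}. -/
def Bminus (B : Fin 4 → Fin 4 → ℝ) (i : Fin 3) : ℝ :=
  (1/4) * ∑ j, ∑ k, eps3 i j k * B j.succ k.succ - (1/2) * B 0 i.succ

/-- Hodge dual (⋆B)^{IJ} = (1/2) ε^{IJ}_{KL} B^{KL} (Euclidean metric). -/
def hodge (B : Fin 4 → Fin 4 → ℝ) (I J : Fin 4) : ℝ :=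
  (1/2) * ∑ K, ∑ L, eps4 I J K L * B K L

@[simp] lemma eps4_ab (a c d : Fin 4) : eps4 a a c d = 0 := by simp [eps4, sgnZ]
@[simp] lemma eps4_ac (a b d : Fin 4) : eps4 a b a d = 0 := by simp [eps4, sgnZ]
@[simp] lemma eps4_ad (a b c : Fin 4) : eps4 a b c a = 0 := by simp [eps4, sgnZ]
@[simp] lemma eps4_bc (a b d : Fin 4) : eps4 a b b d = 0 := by simp [eps4, sgnZ]
@[simp] lemma eps4_bd (a b c : Fin 4) : eps4 a b c b = 0 := by simp [eps4, sgnZ]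
@[simp] lemma eps4_cd (a b c : Fin 4) : eps4 a b c c = 0 := by simp [eps4, sgnZ]
lemma fc0 : ((0:Fin 4):ℤ) = 0 := rfl
lemma fc1 : ((1:Fin 4):ℤ) = 1 := rfl
lemma fc2 : ((2:Fin 4):ℤ) = 2 := rfl
lemma fc3 : ((3:Fin 4):ℤ) = 3 := rfl

@[simp] lemma eps4_0123 : eps4 0 1 2 3 = 1 := by norm_num [eps4, sgnZ, fc0, fc1, fc2, fc3]
@[simp] lemma eps4_0132 : eps4 0 1 3 2 = -1 := by norm_num [eps4, sgnZ, fc0, fc1, fc2, fc3]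
@[simp] lemma eps4_0213 : eps4 0 2 1 3 = -1 := by norm_num [eps4, sgnZ, fc0, fc1, fc2, fc3]
@[simp] lemma eps4_0231 : eps4 0 2 3 1 = 1 := by norm_num [eps4, sgnZ, fc0, fc1, fc2, fc3]
@[simp] lemma eps4_0312 : eps4 0 3 1 2 = 1 := by norm_num [eps4, sgnZ, fc0, fc1, fc2, fc3]
@[simp] lemma eps4_0321 : eps4 0 3 2 1 = -1 := by norm_num [eps4, sgnZ, fc0, fc1, fc2, fc3]
@[simp] lemma eps4_1023 : eps4 1 0 2 3 = -1 := by norm_num [eps4, sgnZ, fc0, fc1, fc2, fc3]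
@[simp] lemma eps4_1032 : eps4 1 0 3 2 = 1 := by norm_num [eps4, sgnZ, fc0, fc1, fc2, fc3]
@[simp] lemma eps4_1203 : eps4 1 2 0 3 = 1 := by norm_num [eps4, sgnZ, fc0, fc1, fc2, fc3]
@[simp] lemma eps4_1230 : eps4 1 2 3 0 = -1 := by norm_num [eps4, sgnZ, fc0, fc1, fc2, fc3]
@[simp] lemma eps4_1302 : eps4 1 3 0 2 = -1 := by norm_num [eps4, sgnZ, fc0, fc1, fc2, fc3]
@[simp] lemma eps4_1320 : eps4 1 3 2 0 = 1 := by norm_num [eps4, sgnZ, fc0, fc1, fc2, fc3]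
@[simp] lemma eps4_2013 : eps4 2 0 1 3 = 1 := by norm_num [eps4, sgnZ, fc0, fc1, fc2, fc3]
@[simp] lemma eps4_2031 : eps4 2 0 3 1 = -1 := by norm_num [eps4, sgnZ, fc0, fc1, fc2, fc3]
@[simp] lemma eps4_2103 : eps4 2 1 0 3 = -1 := by norm_num [eps4, sgnZ, fc0, fc1, fc2, fc3]
@[simp] lemma eps4_2130 : eps4 2 1 3 0 = 1 := by norm_num [eps4, sgnZ, fc0, fc1, fc2, fc3]
@[simp] lemma eps4_2301 : eps4 2 3 0 1 = 1 := by norm_num [eps4, sgnZ, fc0, fc1, fc2, fc3]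
@[simp] lemma eps4_2310 : eps4 2 3 1 0 = -1 := by norm_num [eps4, sgnZ, fc0, fc1, fc2, fc3]
@[simp] lemma eps4_3012 : eps4 3 0 1 2 = -1 := by norm_num [eps4, sgnZ, fc0, fc1, fc2, fc3]
@[simp] lemma eps4_3021 : eps4 3 0 2 1 = 1 := by norm_num [eps4, sgnZ, fc0, fc1, fc2, fc3]
@[simp] lemma eps4_3102 : eps4 3 1 0 2 = 1 := by norm_num [eps4, sgnZ, fc0, fc1, fc2, fc3]
@[simp] lemma eps4_3120 : eps4 3 1 2 0 = -1 := by norm_num [eps4, sgnZ, fc0, fc1, fc2, fc3]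
@[simp] lemma eps4_3201 : eps4 3 2 0 1 = -1 := by norm_num [eps4, sgnZ, fc0, fc1, fc2, fc3]
@[simp] lemma eps4_3210 : eps4 3 2 1 0 = 1 := by norm_num [eps4, sgnZ, fc0, fc1, fc2, fc3]
lemma diag_zero {B : Fin 4 → Fin 4 → ℝ} (h : Antisym B) (I : Fin 4) : B I I = 0 := by
  have := h I I; linarith

set_option maxHeartbeats 2000000 in
/-- Key algebraic identity: for antisymmetric B, C,
`(ε B C) * N I = -4 * (∑_J B_{IJ} (⋆C N)_J + ∑_J C_{IJ} (⋆B N)_J)`. -/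
lemma key (B C : Fin 4 → Fin 4 → ℝ) (hB : Antisym B) (hC : Antisym C) (N : Fin 4 → ℝ)
    (I : Fin 4) :
    (∑ I, ∑ J, ∑ K, ∑ L, eps4 I J K L * B I J * C K L) * N I =
    -4 * (∑ J, B I J * (∑ K, hodge C J K * N K) + ∑ J, C I J * (∑ K, hodge B J K * N K)) := by
  fin_cases I <;>
  · simp only [hodge, Fin.sum_univ_four, eps4_ab, eps4_ac, eps4_ad, eps4_bc, eps4_bd, eps4_cd,
      eps4_0123, eps4_0132, eps4_0213, eps4_0231, eps4_0312, eps4_0321,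
      eps4_1023, eps4_1032, eps4_1203, eps4_1230, eps4_1302, eps4_1320,
      eps4_2013, eps4_2031, eps4_2103, eps4_2130, eps4_2301, eps4_2310,
      eps4_3012, eps4_3021, eps4_3102, eps4_3120, eps4_3201, eps4_3210,
      diag_zero hB, diag_zero hC, hB 1 0, hB 2 0, hB 3 0, hB 2 1, hB 3 1, hB 3 2,
      hC 1 0, hC 2 0, hC 3 0, hC 2 1, hC 3 1, hC 3 2,
      show (⟨0, by omega⟩ : Fin 4) = 0 from rfl, show (⟨1, by omega⟩ : Fin 4) = 1 from rfl,
      show (⟨2, by omega⟩ : Fin 4) = 2 from rfl, show (⟨3, by omega⟩ : Fin 4) = 3 from rfl]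
    ring

/-- If antisymmetric B, C on ℝ⁴ admit a common nonzero vector N with
(⋆B)^{IJ}N_J = 0 and (⋆C)^{IJ}N_J = 0, then ε_{IJKL}B^{IJ}C^{KL} = 0. -/
theorem common_normal_eps_vanishes (B C : Fin 4 → Fin 4 → ℝ)
    (hB : Antisym B) (hC : Antisym C) (N : Fin 4 → ℝ) (hN : N ≠ 0)
    (hBN : ∀ I, ∑ J, hodge B I J * N J = 0)
    (hCN : ∀ I, ∑ J, hodge C I J * N J = 0) :
    (∑ I, ∑ J, ∑ K, ∑ L, eps4 I J K L * B I J * C K L) = 0 := by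
  obtain ⟨i, hi⟩ := Function.ne_iff.mp hN
  have h := key B C hB hC N i
  simp only [hBN, hCN, mul_zero, add_zero, zero_add] at h
  have : (∑ I, ∑ J, ∑ K, ∑ L, eps4 I J K L * B I J * C K L) * N i = 0 := by
    rw [h]; simp
  rcases mul_eq_zero.mp this with h' | h'
  · exact h'
  · exact absurd h' hi
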